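/- Fix a positive integer m. Let χ̃_i = -(m+1-i) for 1 ≤ i ≤ m and ξ_j = -(m + 1/2 - j) for 1 ≤ j ≤ m. Suppose σ and σ' are signed permutations of {1,...,m} (bijections of {±1,...,±m} with σ(-i) = -σ(i)), acting by (σχ̃)_i = χ̃_{σ(i)} where χ̃_{-i} := -χ̃_i, and similarly for σ' on ξ. Assume: (1) χ̃_{σ(i)} - ξ_{σ'(j)} ≠ 1/2 for all i < j; (2) χ̃_{σ(i)} - ξ_{σ'(j)} ≠ -1/2 for all i > j; (3) ξ_{σ'(j)} ≠ 1/2 for all j; (4) χ̃_{σ(i)} + ξ_{σ'(j)} ≠ 1/2 for all i, j. Then σ and σ' are both the identity. -/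

import Mathlib

/-- Fix `m > 0`.  Let `χ̃ i = -(m+1-i)` (1-based), i.e. `χ̃ i = i - m`
for `i : Fin m` (0-based), and `ξ j = -(m + 1/2 - j)` (1-based), i.e. `ξ j = j + 1/2 - m`
(0-based).  A signed permutation `σ` of `{1,…,m}` is encoded as a pair `(π, e)` of a
permutation `π` of `Fin m` and signs `e i ∈ {1,-1}`; it acts by `χ̃_{σ(i)} = e i * χ̃ (π i)`
(using `χ̃_{-k} = -χ̃_k`).  Under hypotheses (1)–(4) below, both signed permutations are the
identity. -/
theorem stmt4 (m : ℕ) (hm : 0 < m)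
    (π π' : Equiv.Perm (Fin m)) (e e' : Fin m → ℚ)
    (he : ∀ i, e i = 1 ∨ e i = -1) (he' : ∀ j, e' j = 1 ∨ e' j = -1)
    (χ ξ : Fin m → ℚ)
    (hχ : ∀ i, χ i = (i : ℚ) - m) (hξ : ∀ j, ξ j = (j : ℚ) + 1/2 - m)
    (h1 : ∀ i j : Fin m, i < j → e i * χ (π i) - e' j * ξ (π' j) ≠ 1/2)
    (h2 : ∀ i j : Fin m, j < i → e i * χ (π i) - e' j * ξ (π' j) ≠ -(1/2))
    (h3 : ∀ j : Fin m, e' j * ξ (π' j) ≠ 1/2)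
    (h4 : ∀ i j : Fin m, e i * χ (π i) + e' j * ξ (π' j) ≠ 1/2) :
    π = 1 ∧ π' = 1 ∧ (∀ i, e i = 1) ∧ (∀ j, e' j = 1) := by
  -- Step A: all signs are `1`.
  -- Key claim: `e (π.symm x) = -1` is impossible, by ascending induction on `x`.
  have key : ∀ d : ℕ, ∀ x : Fin m, (x : ℕ) + d = m - 1 → e (π.symm x) ≠ -1 := by
    intro d
    induction d with
    | zero =>
      intro x hx hneg
      -- then `e' (π'.symm x) = -1` as well
      have hj : e' (π'.symm x) = -1 := by
        rcases he' (π'.symm x) with h | h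
        · exfalso
          apply h4 (π.symm x) (π'.symm x)
          rw [hneg, h, hχ, hξ, Equiv.apply_symm_apply, Equiv.apply_symm_apply]
          ring
        · exact h
      -- with `x = m-1`, `e' (π'.symm x) * ξ x = 1/2`, contradicting (3)
      apply h3 (π'.symm x)
      rw [hj, hξ, Equiv.apply_symm_apply]
      have : (x : ℚ) = (m : ℚ) - 1 := by
        have hx' : (x : ℕ) = m - 1 := by omega
        have : ((x : ℕ) : ℚ) = ((m - 1 : ℕ) : ℚ) := by rw [hx']
        rw [this, Nat.cast_sub hm]
        norm_num
      rw [this]; ring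
    | succ d ih =>
      intro x hx hneg
      have hj : e' (π'.symm x) = -1 := by
        rcases he' (π'.symm x) with h | h
        · exfalso
          apply h4 (π.symm x) (π'.symm x)
          rw [hneg, h, hχ, hξ, Equiv.apply_symm_apply, Equiv.apply_symm_apply]
          ring
        · exact h
      -- pass to `x+1`
      have hx1 : (x : ℕ) + 1 < m := by omega
      set x1 : Fin m := ⟨(x : ℕ) + 1, hx1⟩ with hx1def
      have hneg1 : e (π.symm x1) = -1 := by
        rcases he (π.symm x1) with h | h
        · exfalso
          apply h4 (π.symm x1) (π'.symm x)
          rw [h, hj, hχ, hξ, Equiv.apply_symm_apply, Equiv.apply_symm_apply]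
          have : (x1 : ℚ) = (x : ℚ) + 1 := by
            rw [hx1def]; push_cast; ring
          rw [this]; ring
        · exact h
      exact ih x1 (by simp [hx1def]; omega) hneg1
  have hepos : ∀ i, e i = 1 := by
    intro i
    rcases he i with h | h
    · exact h
    · exfalso
      have hi : π.symm (π i) = i := Equiv.symm_apply_apply _ _
      exact key (m - 1 - (π i : ℕ)) (π i) (by have := (π i).isLt; omega) (by rw [hi]; exact h)
  have he'pos : ∀ j, e' j = 1 := by
    intro j
    rcases he' j with h | h
    · exact h
    · exfalso
      by_cases hy : (π' j : ℕ) = m - 1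
      · apply h3 j
        rw [h, hξ]
        have : ((π' j : ℕ) : ℚ) = (m : ℚ) - 1 := by
          have : ((π' j : ℕ) : ℚ) = ((m - 1 : ℕ) : ℚ) := by rw [hy]
          rw [this, Nat.cast_sub hm]; norm_num
        rw [this]; ring
      · have hy1 : (π' j : ℕ) + 1 < m := by have := (π' j).isLt; omega
        set y1 : Fin m := ⟨(π' j : ℕ) + 1, hy1⟩ with hy1def
        apply h4 (π.symm y1) j
        rw [hepos (π.symm y1), h, hχ, hξ, Equiv.apply_symm_apply]
        have : (y1 : ℚ) = ((π' j : ℕ) : ℚ) + 1 := by rw [hy1def]; push_cast; ring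
        rw [this]; ring
  -- Step B: translate (1) and (2) into order conditions on the inverse permutations.
  have hfg : ∀ k : Fin m, π.symm k ≤ π'.symm k := by
    intro k
    by_contra hlt
    push_neg at hlt
    apply h2 (π.symm k) (π'.symm k) hlt
    rw [hepos, he'pos, hχ, hξ, Equiv.apply_symm_apply, Equiv.apply_symm_apply]
    ring
  have hgf : ∀ k l : Fin m, (k : ℕ) + 1 = (l : ℕ) → π'.symm k ≤ π.symm l := by
    intro k l hkl
    by_contra hlt
    push_neg at hlt
    apply h1 (π.symm l) (π'.symm k) hlt
    rw [hepos, he'pos, hχ, hξ, Equiv.apply_symm_apply, Equiv.apply_symm_apply]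
    have : (l : ℚ) = (k : ℚ) + 1 := by exact_mod_cast congrArg (Nat.cast : ℕ → ℚ) hkl.symm
    rw [this]; ring
  -- chain: `π.symm k ≤ π'.symm k ≤ π.symm (k+1)`, so both inverses are strictly monotone.
  have hstep : ∀ k l : Fin m, (k : ℕ) + 1 = (l : ℕ) →
      π.symm k < π.symm l ∧ π'.symm k < π'.symm l := by
    intro k l hkl
    have h1' : π.symm k ≤ π.symm l := le_trans (hfg k) (hgf k l hkl)
    have h2' : π'.symm k ≤ π'.symm l := le_trans (hgf k l hkl) (hfg l)
    have hne : k ≠ l := by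
      intro h; rw [h] at hkl; omega
    constructor
    · exact lt_of_le_of_ne h1' (fun h => hne (π.symm.injective h))
    · exact lt_of_le_of_ne h2' (fun h => hne (π'.symm.injective h))
  have hmono : ∀ (ρ : Equiv.Perm (Fin m)),
      (∀ k l : Fin m, (k : ℕ) + 1 = (l : ℕ) → ρ.symm k < ρ.symm l) → ρ = 1 := by
    intro ρ hρ
    have hsm : StrictMono (fun k => ρ.symm k) := by
      intro k l hkl
      -- induction on the distance
      have : ∀ d : ℕ, ∀ k l : Fin m, (k : ℕ) + d + 1 = (l : ℕ) → ρ.symm k < ρ.symm l := by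
        intro d
        induction d with
        | zero => intro k l h; exact hρ k l (by omega)
        | succ d ih =>
          intro k l h
          have hmid : (k : ℕ) + d + 1 < m := by have := l.isLt; omega
          set mid : Fin m := ⟨(k : ℕ) + d + 1, hmid⟩
          exact lt_trans (ih k mid (by simp [mid])) (hρ mid l (by simp [mid]; omega))
      exact this ((l : ℕ) - (k : ℕ) - 1) k l (by omega)
    have hid : (fun k => ρ.symm k) = id := by
      apply (StrictMono.range_inj hsm strictMono_id).mp
      rw [Set.range_id]
      exact Set.range_eq_univ.mpr ρ.symm.surjective
    apply Equiv.ext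
    intro i
    have : ρ.symm (ρ i) = id (ρ i) := congrFun hid (ρ i)
    simp only [Equiv.symm_apply_apply, id_eq] at this
    simp [← this]
  exact ⟨hmono π (fun k l h => (hstep k l h).1), hmono π' (fun k l h => (hstep k l h).2),
    hepos, he'pos⟩
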